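/- Let A, B be n×n positive semidefinite complex matrices and let t ∈ (1/2, 1). Set B_t = A^t B^(1-t) + B^t A^(1-t) and F_t = B^(1-t) A^(2t-1) B^(1-t) + A^(1-t) B^(2t-1) A^(1-t). Then the 2n×2n block matrix with blocks [[A + B, B_t], [B_t*, F_t]] is positive semidefinite, where B_t* denotes the conjugate transpose of B_t. -/

import Mathlib

open scoped ComplexOrder Matrix

/-- The real power `A ^ r` of a (positive semidefinite) matrix, defined via the
continuous functional calculus (equivalently, via the spectral decomposition). -/
noncomputable def matRpow {n : ℕ} (A : Matrix (Fin n) (Fin n) ℂ) (r : ℝ) :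
    Matrix (Fin n) (Fin n) ℂ :=
  cfc (fun x : ℝ => x ^ r) A

lemma matrix_continuousOn {n : ℕ} (f : ℝ → ℝ) (A : Matrix (Fin n) (Fin n) ℂ) :
    ContinuousOn f (spectrum ℝ A) := by
  rw [continuousOn_iff_continuous_restrict]
  fun_prop

lemma matRpow_isHermitian {n : ℕ} (A : Matrix (Fin n) (Fin n) ℂ) (r : ℝ) :
    (matRpow A r).IsHermitian := by
  have : IsSelfAdjoint (matRpow A r) := cfc_predicate _ A
  exact this

lemma matRpow_conjTranspose {n : ℕ} (A : Matrix (Fin n) (Fin n) ℂ) (r : ℝ) :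
    (matRpow A r)ᴴ = matRpow A r :=
  matRpow_isHermitian A r

lemma matRpow_mul_matRpow {n : ℕ} {A : Matrix (Fin n) (Fin n) ℂ}
    (hA : A.PosSemidef) {r s : ℝ} (hr : 0 < r) (hs : 0 < s) :
    matRpow A r * matRpow A s = matRpow A (r + s) := by
  unfold matRpow
  rw [← cfc_mul _ _ A (matrix_continuousOn _ A) (matrix_continuousOn _ A)]
  apply cfc_congr
  intro x hx
  have hx0 : 0 ≤ x := by
    rw [hA.isHermitian.spectrum_real_eq_range_eigenvalues] at hx
    obtain ⟨i, rfl⟩ := hx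
    exact hA.eigenvalues_nonneg i
  exact (Real.rpow_add' hx0 (by positivity)).symm

lemma matRpow_one {n : ℕ} {A : Matrix (Fin n) (Fin n) ℂ} (hA : A.PosSemidef) :
    matRpow A 1 = A := by
  unfold matRpow
  have : (fun x : ℝ => x ^ (1 : ℝ)) = fun x : ℝ => x := by
    ext x; exact Real.rpow_one x
  rw [this]
  exact cfc_id ℝ A (show IsSelfAdjoint A from hA.1)

/-- **Block positivity.** For `n×n` positive semidefinite complex matrices `A, B`
and `t ∈ (1/2, 1)`, with `B_t = A^t B^(1-t) + B^t A^(1-t)` and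
`F_t = B^(1-t) A^(2t-1) B^(1-t) + A^(1-t) B^(2t-1) A^(1-t)`, the `2n×2n` block
matrix `[[A + B, B_t], [B_tᴴ, F_t]]` is positive semidefinite. -/
theorem block_matrix_posSemidef {n : ℕ} (A B : Matrix (Fin n) (Fin n) ℂ)
    (hA : A.PosSemidef) (hB : B.PosSemidef) (t : ℝ)
    (ht : t ∈ Set.Ioo (1 / 2 : ℝ) 1) :
    (Matrix.fromBlocks (A + B)
      (matRpow A t * matRpow B (1 - t) + matRpow B t * matRpow A (1 - t))
      (matRpow A t * matRpow B (1 - t) + matRpow B t * matRpow A (1 - t))ᴴ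
      (matRpow B (1 - t) * matRpow A (2 * t - 1) * matRpow B (1 - t) +
        matRpow A (1 - t) * matRpow B (2 * t - 1) * matRpow A (1 - t))).PosSemidef := by
  obtain ⟨ht1, ht2⟩ := ht
  have h1 : (0:ℝ) < 1/2 := by norm_num
  have h2 : (0:ℝ) < t - 1/2 := by linarith
  have h3 : (0:ℝ) < 1 - t := by linarith
  set X : Matrix (Fin n ⊕ Fin n) (Fin n ⊕ Fin n) ℂ :=
    Matrix.fromBlocks (matRpow A (1/2)) 0
      (matRpow B (1 - t) * matRpow A (t - 1/2)) 0 with hX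
  set Y : Matrix (Fin n ⊕ Fin n) (Fin n ⊕ Fin n) ℂ :=
    Matrix.fromBlocks (matRpow B (1/2)) 0
      (matRpow A (1 - t) * matRpow B (t - 1/2)) 0 with hY
  have key : (Matrix.fromBlocks (A + B)
      (matRpow A t * matRpow B (1 - t) + matRpow B t * matRpow A (1 - t))
      (matRpow A t * matRpow B (1 - t) + matRpow B t * matRpow A (1 - t))ᴴ
      (matRpow B (1 - t) * matRpow A (2 * t - 1) * matRpow B (1 - t) +
        matRpow A (1 - t) * matRpow B (2 * t - 1) * matRpow A (1 - t)))
      = X * Xᴴ + Y * Yᴴ := by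
    simp only [hX, hY, Matrix.fromBlocks_conjTranspose, Matrix.fromBlocks_multiply,
      Matrix.fromBlocks_add, Matrix.conjTranspose_add, Matrix.conjTranspose_mul,
      matRpow_conjTranspose, Matrix.conjTranspose_zero, Matrix.mul_zero, Matrix.zero_mul,
      add_zero, zero_add]
    have TL : matRpow A (1/2) * matRpow A (1/2) + matRpow B (1/2) * matRpow B (1/2)
        = A + B := by
      rw [matRpow_mul_matRpow hA h1 h1, matRpow_mul_matRpow hB h1 h1]
      norm_num [matRpow_one hA, matRpow_one hB]
    have TR : matRpow A (1/2) * (matRpow A (t-1/2) * matRpow B (1-t)) +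
        matRpow B (1/2) * (matRpow B (t-1/2) * matRpow A (1-t))
        = matRpow A t * matRpow B (1-t) + matRpow B t * matRpow A (1-t) := by
      simp only [← Matrix.mul_assoc]
      rw [matRpow_mul_matRpow hA h1 h2, matRpow_mul_matRpow hB h1 h2]
      norm_num
    have BL : matRpow B (1-t) * matRpow A (t-1/2) * matRpow A (1/2) +
        matRpow A (1-t) * matRpow B (t-1/2) * matRpow B (1/2)
        = matRpow B (1-t) * matRpow A t + matRpow A (1-t) * matRpow B t := by
      simp only [Matrix.mul_assoc]
      rw [matRpow_mul_matRpow hA h2 h1, matRpow_mul_matRpow hB h2 h1]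
      norm_num
    have BR : matRpow B (1-t) * matRpow A (t-1/2) * (matRpow A (t-1/2) * matRpow B (1-t)) +
        matRpow A (1-t) * matRpow B (t-1/2) * (matRpow B (t-1/2) * matRpow A (1-t))
        = matRpow B (1-t) * matRpow A (2*t-1) * matRpow B (1-t) +
          matRpow A (1-t) * matRpow B (2*t-1) * matRpow A (1-t) := by
      rw [Matrix.mul_assoc (matRpow B (1-t)), Matrix.mul_assoc (matRpow A (1-t)),
        ← Matrix.mul_assoc (matRpow A (t-1/2)) (matRpow A (t-1/2)),
        ← Matrix.mul_assoc (matRpow B (t-1/2)) (matRpow B (t-1/2)),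
        matRpow_mul_matRpow hA h2 h2, matRpow_mul_matRpow hB h2 h2]
      have : t - 1/2 + (t - 1/2) = 2*t - 1 := by ring
      rw [this, Matrix.mul_assoc, Matrix.mul_assoc]
    rw [TL, TR, BL, BR]
  rw [key]
  exact (Matrix.posSemidef_self_mul_conjTranspose X).add
    (Matrix.posSemidef_self_mul_conjTranspose Y)
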